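/- Let (a_j) be a sequence of integers with a_j ≥ b_j for all j ≥ 1, where b_j is the Sylvester sequence of 1 (b_1 = 2, b_{j+1} = b_j(b_j−1)+1). Then ∑_{j=1}^∞ log(1 + a_j²)/a_j converges and is less than 5/2. -/

import Mathlib

open Real

-- helper log bounds
lemma one_sub_inv_le_log {x : ℝ} (hx : 0 < x) : 1 - 1/x ≤ Real.log x := by
  have h := Real.log_le_sub_one_of_pos (show (0:ℝ) < 1/x by positivity)
  rw [Real.log_div one_ne_zero (ne_of_gt hx), Real.log_one] at h
  linarith

lemma log_five_lb : (1.609 : ℝ) ≤ Real.log 5 := by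
  have h1 : Real.log (128/125) ≤ 128/125 - 1 := Real.log_le_sub_one_of_pos (by norm_num)
  have h2 : Real.log (128/125) = 7 * Real.log 2 - 3 * Real.log 5 := by
    rw [show (128:ℝ)/125 = 2^7 / 5^3 by norm_num, Real.log_div (by positivity) (by positivity),
      Real.log_pow, Real.log_pow]
    push_cast; ring
  have h3 : (0.6931471803 : ℝ) < Real.log 2 := Real.log_two_gt_d9
  nlinarith

lemma log_five_ub : Real.log 5 ≤ (1.60954 : ℝ) := by
  have h1 : 1 - 125/128 ≤ Real.log (128/125) := by
    have := one_sub_inv_le_log (show (0:ℝ) < 128/125 by norm_num)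
    norm_num at this ⊢; linarith
  have h2 : Real.log (128/125) = 7 * Real.log 2 - 3 * Real.log 5 := by
    rw [show (128:ℝ)/125 = 2^7 / 5^3 by norm_num, Real.log_div (by positivity) (by positivity),
      Real.log_pow, Real.log_pow]
    push_cast; ring
  have h3 : Real.log 2 < 0.6931471808 := Real.log_two_lt_d9
  nlinarith

-- for t ≥ 5, 2 - 2/t ≤ log t
lemma log_ge_two_sub {t : ℝ} (ht : 5 ≤ t) : 2 - 2/t ≤ Real.log t := by
  have ht0 : (0:ℝ) < t := by linarith
  have h1 : Real.log t = Real.log 5 + Real.log (t/5) := by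
    rw [Real.log_div (ne_of_gt ht0) (by norm_num)]; ring
  have h2 : 1 - 5/t ≤ Real.log (t/5) := by
    have := one_sub_inv_le_log (show (0:ℝ) < t/5 by positivity)
    rwa [show 1/(t/5) = 5/t by field_simp] at this
  have h3 := log_five_lb
  have h4 : 3/t ≤ 3/5 := by
    apply div_le_div_of_nonneg_left (by norm_num) (by norm_num) ht
  rw [h1]
  have : 5/t = 2/t + 3/t := by ring
  linarith

noncomputable def F (x : ℝ) : ℝ := Real.log (1 + x^2) / x

lemma F_antitone : AntitoneOn F (Set.Ici 2) := by
  have hderiv : ∀ x : ℝ, 2 ≤ x →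
      HasDerivAt F ((2*x/(1+x^2) * x - Real.log (1+x^2)) / x^2) x := by
    intro x hx
    have hx0 : x ≠ 0 := by positivity
    have h1 : HasDerivAt (fun y : ℝ => 1 + y^2) (2*x) x := by
      simpa [Nat.cast_ofNat] using ((hasDerivAt_pow 2 x).const_add 1)
    have h2 : HasDerivAt (fun y : ℝ => Real.log (1 + y^2)) (2*x/(1+x^2)) x :=
      h1.log (by positivity)
    have h3 := h2.div (hasDerivAt_id x) hx0
    have hF : F = (fun y : ℝ => Real.log (1 + y^2)) / id := by
      funext y; rfl
    rw [hF]
    simpa [mul_comm] using h3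
  apply antitoneOn_of_deriv_nonpos (convex_Ici 2)
  · intro x hx
    exact ((hderiv x hx).continuousAt).continuousWithinAt
  · intro x hx
    rw [interior_Ici] at hx
    exact ((hderiv x hx.le).differentiableAt).differentiableWithinAt
  · intro x hx
    rw [interior_Ici] at hx
    have hx2 : 2 ≤ x := hx.le
    rw [(hderiv x hx2).deriv]
    have ht : (5:ℝ) ≤ 1 + x^2 := by nlinarith
    have ht0 : (0:ℝ) < 1 + x^2 := by linarith
    have hkey := log_ge_two_sub ht
    apply div_nonpos_of_nonpos_of_nonneg _ (by positivity)
    have : 2*x/(1+x^2)*x = 2 - 2/(1+x^2) := by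
      field_simp; ring
    rw [this]
    linarith

-- crude bound
lemma F_le_four_div_sqrt {x : ℝ} (hx : 1 ≤ x) : F x ≤ 4 / Real.sqrt x := by
  have hx0 : (0:ℝ) < x := by linarith
  have hs : 0 < Real.sqrt x := Real.sqrt_pos.mpr hx0
  have hlogx : Real.log x ≤ 2 * (Real.sqrt x - 1) := by
    have h1 : Real.log x = 2 * Real.log (Real.sqrt x) := by
      rw [show (2:ℝ) * Real.log (Real.sqrt x) = Real.log (Real.sqrt x ^ 2) by
        rw [Real.log_pow]; push_cast; ring, Real.sq_sqrt hx0.le]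
    have h2 : Real.log (Real.sqrt x) ≤ Real.sqrt x - 1 := Real.log_le_sub_one_of_pos hs
    linarith
  have h1 : Real.log (1 + x^2) ≤ Real.log (2 * x^2) := by
    apply Real.log_le_log (by positivity)
    nlinarith
  have h2 : Real.log (2 * x^2) = Real.log 2 + 2 * Real.log x := by
    rw [Real.log_mul (by norm_num) (by positivity), Real.log_pow]; push_cast; ring
  have hl2 : Real.log 2 ≤ 1 := by
    have := Real.log_le_sub_one_of_pos (show (0:ℝ) < 2 by norm_num); linarith
  have h3 : Real.log (1 + x^2) ≤ 4 * Real.sqrt x := by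
    calc Real.log (1 + x^2) ≤ Real.log 2 + 2 * Real.log x := by linarith
    _ ≤ 1 + 4 * (Real.sqrt x - 1) := by linarith
    _ ≤ 4 * Real.sqrt x := by linarith
  rw [F, div_le_div_iff₀ hx0 hs]
  calc Real.log (1 + x^2) * Real.sqrt x ≤ (4 * Real.sqrt x) * Real.sqrt x := by
        apply mul_le_mul_of_nonneg_right h3 hs.le
    _ = 4 * x := by rw [mul_assoc, Real.mul_self_sqrt hx0.le]


/-- The Sylvester sequence of 1: `2, 3, 7, 43, 1807, …`. -/
def sylvOne : ℕ → ℕ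
  | 0 => 2
  | n + 1 => sylvOne n * (sylvOne n - 1) + 1

lemma sylv_two_le : ∀ n, 2 ≤ sylvOne n := by
  intro n
  induction n with
  | zero => simp [sylvOne]
  | succ k ih =>
    show 2 ≤ sylvOne k * (sylvOne k - 1) + 1
    have : 1 ≤ sylvOne k - 1 := by omega
    nlinarith

lemma sylv_tail : ∀ n, 1807 * 1806^n ≤ sylvOne (n+4) := by
  intro n
  induction n with
  | zero => simp [show sylvOne 4 = 1807 from rfl]
  | succ k ih =>
    have h1 : 1 ≤ 1806^k := Nat.one_le_pow _ _ (by norm_num)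
    have hb : 1807 ≤ sylvOne (k+4) := le_trans (by nlinarith) ih
    show 1807 * 1806^(k+1) ≤ sylvOne (k+4) * (sylvOne (k+4) - 1) + 1
    have h2 : 1806 ≤ sylvOne (k+4) - 1 := by omega
    calc 1807 * 1806^(k+1) = (1807 * 1806^k) * 1806 := by ring
      _ ≤ sylvOne (k+4) * (sylvOne (k+4) - 1) := Nat.mul_le_mul ih h2
      _ ≤ sylvOne (k+4) * (sylvOne (k+4) - 1) + 1 := Nat.le_succ _

theorem sum_log_one_add_sq_div_lt (a : ℕ → ℕ) (ha : ∀ j, sylvOne j ≤ a j) :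
    Summable (fun j : ℕ => Real.log (1 + (a j : ℝ)^2) / (a j : ℝ)) ∧
    ∑' j : ℕ, Real.log (1 + (a j : ℝ)^2) / (a j : ℝ) < 5 / 2 := by
  set T : ℕ → ℝ := fun j : ℕ => Real.log (1 + (a j : ℝ)^2) / (a j : ℝ) with hT
  have hb2 : ∀ j, (2:ℝ) ≤ (sylvOne j : ℝ) := fun j => by exact_mod_cast sylv_two_le j
  have hba : ∀ j, (sylvOne j : ℝ) ≤ (a j : ℝ) := fun j => by exact_mod_cast ha j
  have hTF : ∀ j, T j = F (a j) := fun j => rfl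
  have hTle : ∀ j, T j ≤ F (sylvOne j) := by
    intro j
    rw [hTF]
    exact F_antitone (Set.mem_Ici.mpr (hb2 j))
      (Set.mem_Ici.mpr ((hb2 j).trans (hba j))) (hba j)
  have hT0 : ∀ j, 0 ≤ T j := by
    intro j
    apply div_nonneg _ (by positivity)
    apply Real.log_nonneg
    nlinarith [sq_nonneg ((a j : ℝ))]
  -- tail bound
  have htail : ∀ j : ℕ, T (j+4) ≤ (2/21) * (1/42)^j := by
    intro j
    have hbig : ((42:ℝ)^(j+1))^2 ≤ (sylvOne (j+4) : ℝ) := by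
      have h1 : (1764 : ℕ)^(j+1) ≤ 1807 * 1806^j := by
        calc (1764:ℕ)^(j+1) = 1764 * 1764^j := by ring
          _ ≤ 1807 * 1806^j := Nat.mul_le_mul (by norm_num)
              (Nat.pow_le_pow_left (by norm_num) j)
      have h2 : (1764 : ℕ)^(j+1) ≤ sylvOne (j+4) := h1.trans (sylv_tail j)
      have : ((42:ℝ)^(j+1))^2 = ((1764:ℕ)^(j+1) : ℝ) := by
        push_cast
        rw [show (1764:ℝ) = 42^2 by norm_num, ← pow_mul, ← pow_mul, mul_comm]
      rw [this]
      exact_mod_cast h2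
    have hb1 : (1:ℝ) ≤ (sylvOne (j+4) : ℝ) := by linarith [hb2 (j+4)]
    have hsqrt : (42:ℝ)^(j+1) ≤ Real.sqrt (sylvOne (j+4)) := by
      have := Real.sqrt_le_sqrt hbig
      rwa [Real.sqrt_sq (by positivity)] at this
    have h42 : (0:ℝ) < (42:ℝ)^(j+1) := by positivity
    calc T (j+4) ≤ F (sylvOne (j+4)) := hTle (j+4)
      _ ≤ 4 / Real.sqrt (sylvOne (j+4)) := F_le_four_div_sqrt hb1
      _ ≤ 4 / (42:ℝ)^(j+1) := by
          apply div_le_div_of_nonneg_left (by norm_num) h42 hsqrt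
      _ = (2/21) * (1/42)^j := by
          rw [div_pow, one_pow, pow_succ]
          field_simp
          ring
  have hv : Summable (fun j : ℕ => (2/21:ℝ) * (1/42)^j) :=
    (summable_geometric_of_lt_one (by norm_num) (by norm_num)).mul_left _
  have hT4 : Summable (fun j => T (j+4)) :=
    Summable.of_nonneg_of_le (fun j => hT0 _) htail hv
  have hSum : Summable T := (summable_nat_add_iff 4).mp hT4
  refine ⟨hSum, ?_⟩
  have hsplit : ∑ i ∈ Finset.range 4, T i + ∑' i, T (i+4) = ∑' i, T i :=
    Summable.sum_add_tsum_nat_add 4 hSum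
  have htailsum : ∑' i, T (i+4) ≤ 4/41 := by
    have h1 : ∑' i, T (i+4) ≤ ∑' j : ℕ, (2/21:ℝ) * (1/42)^j :=
      Summable.tsum_le_tsum htail hT4 hv
    have h2 : ∑' j : ℕ, (2/21:ℝ) * (1/42)^j = (2/21) * (1 - 1/42)⁻¹ := by
      rw [tsum_mul_left, tsum_geometric_of_lt_one (by norm_num) (by norm_num)]
    rw [h2] at h1
    norm_num at h1 ⊢
    linarith
  -- head terms
  have l2u : Real.log 2 < 0.6931471808 := Real.log_two_lt_d9
  have l5u := log_five_ub
  have hF0 : F ((sylvOne 0 : ℕ) : ℝ) = Real.log 5 / 2 := by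
    norm_num [F, show sylvOne 0 = 2 from rfl]
  have hF1 : F ((sylvOne 1 : ℕ) : ℝ) = (Real.log 2 + Real.log 5) / 3 := by
    rw [show sylvOne 1 = 3 from rfl]
    have : (1:ℝ) + (3:ℝ)^2 = 2 * 5 := by norm_num
    rw [F]
    push_cast
    rw [this, Real.log_mul (by norm_num) (by norm_num)]
  have hF2 : F ((sylvOne 2 : ℕ) : ℝ) = (Real.log 2 + 2 * Real.log 5) / 7 := by
    rw [show sylvOne 2 = 7 from rfl]
    have : (1:ℝ) + (7:ℝ)^2 = 2 * 5^2 := by norm_num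
    rw [F]
    push_cast
    rw [this, Real.log_mul (by norm_num) (by norm_num), Real.log_pow]
    push_cast; ring
  have hF3 : F ((sylvOne 3 : ℕ) : ℝ) ≤ 11 * Real.log 2 / 43 := by
    rw [show sylvOne 3 = 43 from rfl]
    rw [F]
    push_cast
    have h1 : (1:ℝ) + (43:ℝ)^2 = 1850 := by norm_num
    rw [h1]
    have h2 : Real.log 1850 ≤ Real.log (2^11) := Real.log_le_log (by norm_num) (by norm_num)
    rw [Real.log_pow] at h2
    push_cast at h2
    apply div_le_div_of_nonneg_right ?_ (by norm_num)
    linarith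
  have hhead : ∑ i ∈ Finset.range 4, T i ≤
      Real.log 5 / 2 + (Real.log 2 + Real.log 5) / 3 + (Real.log 2 + 2 * Real.log 5) / 7
        + 11 * Real.log 2 / 43 := by
    rw [Finset.sum_range_succ, Finset.sum_range_succ, Finset.sum_range_succ,
      Finset.sum_range_one]
    have := hTle 0
    have := hTle 1
    have := hTle 2
    have := hTle 3
    rw [hF0] at *
    linarith [hTle 0, hTle 1, hTle 2, hTle 3, hF0, hF1, hF2, hF3]
  rw [← hsplit]
  have l5l := log_five_lb
  have l2l : (0.6931471803:ℝ) < Real.log 2 := Real.log_two_gt_d9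
  nlinarith [htailsum, hhead]
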